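/- Every k-hyperhole H (a blowup of the cycle C_k, k ≥ 4, with all blowup cliques non-empty) satisfies χ(H) = max(ω(H), ⌈|V(H)|/α(H)⌉), where α(H) is the independence number. -/

import Mathlib

open SimpleGraph

/-- The independence number of `G`: the clique number of the complement. -/
noncomputable def indepNum {V : Type*} (G : SimpleGraph V) : ℕ := Gᶜ.cliqueNum



lemma exists_between_sum {ι : Type*} [DecidableEq ι] (s : Finset ι) (L U : ι → ℕ) (T : ℕ)
    (h : ∀ i ∈ s, L i ≤ U i) (h1 : ∑ i ∈ s, L i ≤ T) (h2 : T ≤ ∑ i ∈ s, U i) :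
    ∃ δ : ι → ℕ, (∀ i ∈ s, L i ≤ δ i ∧ δ i ≤ U i) ∧ ∑ i ∈ s, δ i = T := by
  induction s using Finset.induction generalizing T with
  | empty => exact ⟨L, by simp, by simpa using le_antisymm h1 h2⟩
  | @insert a s ha ih =>
    rw [Finset.sum_insert ha] at h1 h2
    set da := max (L a) (T - ∑ i ∈ s, U i) with hda
    have hLa : L a ≤ U a := h a (Finset.mem_insert_self a s)
    have hLU : ∑ i ∈ s, L i ≤ ∑ i ∈ s, U i :=
      Finset.sum_le_sum fun i hi => h i (Finset.mem_insert_of_mem hi)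
    obtain ⟨δ', hδ'1, hδ'2⟩ := ih (T - da) (fun i hi => h i (Finset.mem_insert_of_mem hi))
      (by omega) (by omega)
    refine ⟨Function.update δ' a da, fun i hi => ?_, ?_⟩
    · rcases Finset.mem_insert.mp hi with rfl | hi
      · simp only [Function.update_self]; omega
      · have hne : i ≠ a := fun h' => ha (by rwa [h'] at hi)
        simp only [Function.update_of_ne hne]
        exact hδ'1 i hi
    · rw [Finset.sum_insert ha, Function.update_self]
      have : ∑ x ∈ s, Function.update δ' a da x = ∑ x ∈ s, δ' x :=
        Finset.sum_congr rfl fun i hi => Function.update_of_ne (fun h' => ha (by rwa [h'] at hi)) _ _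
      rw [this, hδ'2]
      omega

lemma arcs {k t : ℕ} (hk : 4 ≤ k) (w : Fin k → ℕ)
    (hpair : ∀ i : Fin k, w i + w (i + ⟨1, Nat.lt_of_lt_of_le (by norm_num) hk⟩) ≤ t)
    (htot : ∑ i, w i ≤ (k / 2) * t) :
    ∃ A : Fin k → Finset (Fin t), (∀ i, (A i).card = w i) ∧
      ∀ i : Fin k, Disjoint (A i) (A (i + ⟨1, Nat.lt_of_lt_of_le (by norm_num) hk⟩)) := by
  have hk0 : 0 < k := by omega
  haveI : NeZero k := ⟨by omega⟩
  set one : Fin k := ⟨1, by omega⟩ with hone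
  by_cases ht0 : t = 0
  · subst ht0
    have hw0 : ∀ i, w i = 0 := fun i => by have := hpair i; omega
    exact ⟨fun _ => ∅, fun i => by simp [hw0 i], fun i => by simp⟩
  have ht : 0 < t := Nat.pos_of_ne_zero ht0
  set n := ∑ i, w i with hn
  -- reindexed sum
  have hsucc_sum : ∑ i : Fin k, w (i + one) = n := by
    rw [hn]
    exact Fintype.sum_equiv (Equiv.addRight one) _ _ (fun i => rfl)
  have hwle : ∀ i, w i ≤ t := fun i => le_trans (Nat.le_add_right _ _) (hpair i)
  -- sum of upper bounds
  have hU : ∑ i : Fin k, (t - w (i + one)) = k * t - n := by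
    rw [Finset.sum_tsub_distrib Finset.univ
        (fun i _ => le_trans (Nat.le_add_left _ _) (hpair i)),
      hsucc_sum, Finset.sum_const, Finset.card_univ, Fintype.card_fin, smul_eq_mul]
  -- target sum
  set c := (n + t - 1) / t with hc
  have hcn : n ≤ c * t := by
    rcases Nat.eq_zero_or_pos n with h0 | h0
    · omega
    have hkey : (n + t - 1) / t = (n - 1) / t + 1 := by
      rw [show n + t - 1 = (n-1) + 1 * t by omega, Nat.add_mul_div_right _ _ ht]
    have hct : c * t = t * ((n - 1) / t) + t := by rw [hc, hkey]; ring
    have h3 := Nat.div_add_mod (n - 1) t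
    have h4 : (n - 1) % t < t := Nat.mod_lt _ ht
    omega
  have hcm : c ≤ k / 2 := by
    rw [hc, Nat.div_le_iff_le_mul_add_pred ht]
    have hcomm : k / 2 * t = t * (k / 2) := Nat.mul_comm _ _
    omega
  have hTU : c * t ≤ k * t - n := by
    have h1 : c * t ≤ k / 2 * t := Nat.mul_le_mul_right _ hcm
    have h3 : k / 2 * t + k / 2 * t ≤ k * t := by
      have h4 : k / 2 + k / 2 ≤ k := by omega
      calc k / 2 * t + k / 2 * t = (k / 2 + k / 2) * t := by ring
        _ ≤ k * t := Nat.mul_le_mul_right _ h4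
    omega
  -- choose δ
  obtain ⟨δ, hδb, hδs⟩ := exists_between_sum Finset.univ w (fun i => t - w (i + one)) (c * t)
    (fun i _ => by have := hpair i; show w i ≤ t - w (i + one); omega) hcn
    (by rw [hU]; exact hTU)
  -- partial sums
  set e : ℕ → Fin k := fun j => ⟨j % k, Nat.mod_lt _ hk0⟩ with he
  set a : ℕ → ℕ := fun i => ∑ j ∈ Finset.range i, δ (e j) with ha
  have hennat : ∀ i : Fin k, e i.val = i := fun i => by
    simp only [he]; exact Fin.ext (Nat.mod_eq_of_lt i.isLt)
  -- key congruence: a (i+1).val ≡ a i.val + δ i  [MOD t]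
  have hkey : ∀ i : Fin k, (a i.val + δ i) % t = a ((i + one).val) % t := by
    intro i
    have hval : (i + one).val = (i.val + 1) % k := by
      rw [Fin.add_def]
    rcases Nat.lt_or_ge (i.val + 1) k with hlt | hge
    · have : (i + one).val = i.val + 1 := by rw [hval, Nat.mod_eq_of_lt hlt]
      rw [this]
      have : a (i.val + 1) = a i.val + δ i := by
        rw [ha]; simp only []
        rw [Finset.sum_range_succ, hennat i]
      rw [this]
    · -- i.val = k - 1
      have hiv : i.val = k - 1 := by have := i.isLt; omega
      have hv0 : (i + one).val = 0 := by
        rw [hval, hiv, show k - 1 + 1 = k by omega, Nat.mod_self]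
      have hak : a k = c * t := by
        rw [ha]
        have : ∑ j ∈ Finset.range k, δ (e j) = ∑ i : Fin k, δ (e i.val) :=
          (Fin.sum_univ_eq_sum_range (fun j => δ (e j)) k).symm
        simp only []
        rw [this, Finset.sum_congr rfl (fun i _ => by rw [hennat i]), hδs]
      have hak' : a k = a (k - 1) + δ i := by
        rw [ha]; simp only []
        rw [show k = (k-1) + 1 by omega, Finset.sum_range_succ]
        congr 1
        rw [show e (k-1) = i from ?_]
        · rw [he]; simp only []
          exact Fin.ext (by simp [Nat.mod_eq_of_lt (show k - 1 < k by omega), hiv])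
      rw [hv0]
      have h0 : a 0 = 0 := by rw [ha]; simp
      have hsum : a i.val + δ i = c * t := by rw [hiv]; omega
      rw [hsum, h0]
      simp [Nat.mul_mod_left]
  refine ⟨fun i => (Finset.range (w i)).image
      (fun j => (⟨(a i.val + j) % t, Nat.mod_lt _ ht⟩ : Fin t)), fun i => ?_, fun i => ?_⟩
  · rw [Finset.card_image_of_injOn, Finset.card_range]
    intro j hj j' hj' hjj
    simp only [Finset.coe_range, Set.mem_Iio] at hj hj'
    have h1 : (a i.val + j) % t = (a i.val + j') % t := congrArg Fin.val hjj
    have h2 : j % t = j' % t := Nat.ModEq.add_left_cancel' _ h1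
    rwa [Nat.mod_eq_of_lt (lt_of_lt_of_le hj (hwle i)),
      Nat.mod_eq_of_lt (lt_of_lt_of_le hj' (hwle i))] at h2
  · rw [Finset.disjoint_left]
    rintro x hx hx'
    simp only [Finset.mem_image, Finset.mem_range] at hx hx'
    obtain ⟨j, hj, hjx⟩ := hx
    obtain ⟨j', hj', hjx'⟩ := hx'
    have h1 : (a i.val + j) % t = (a ((i + one).val) + j') % t := by
      have := hjx.trans hjx'.symm
      exact congrArg Fin.val this
    have hmod : Nat.ModEq t (a i.val + δ i) (a ((i + one).val)) := hkey i
    have h2 : (a i.val + (δ i + j')) % t = (a ((i + one).val) + j') % t := by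
      have h5 := hmod.add_right j'
      rwa [add_assoc] at h5
    have h3 : j % t = (δ i + j') % t :=
      Nat.ModEq.add_left_cancel' _ (h1.trans h2.symm)
    obtain ⟨hδ1, hδ2⟩ := hδb i (Finset.mem_univ i)
    have hb1 : j < t := lt_of_lt_of_le hj (hwle i)
    have hb2 : δ i + j' < t := by
      have := hpair i
      omega
    rw [Nat.mod_eq_of_lt hb1, Nat.mod_eq_of_lt hb2] at h3
    omega

theorem stmt_12 {V : Type*} [Fintype V] (G : SimpleGraph V)
    (k : ℕ) (hk : 4 ≤ k) (B : Fin k → Set V)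
    (hcover : ∀ v : V, ∃ i, v ∈ B i)
    (hdisj : ∀ i j : Fin k, i ≠ j → Disjoint (B i) (B j))
    (hne : ∀ i, (B i).Nonempty)
    (hclique : ∀ i, G.IsClique (B i))
    (hadj : ∀ i : Fin k, ∀ x ∈ B i, ∀ y ∈ B (i + ⟨1, by omega⟩), G.Adj x y)
    (hnon : ∀ i j : Fin k, j ≠ i → j ≠ i + ⟨1, by omega⟩ → i ≠ j + ⟨1, by omega⟩ →
      ∀ x ∈ B i, ∀ y ∈ B j, ¬ G.Adj x y) :
    G.chromaticNumber =
      (max G.cliqueNum ⌈(Fintype.card V : ℚ) / (_root_.indepNum G)⌉₊ : ℕ∞) := by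
  classical
  haveI : NeZero k := ⟨by omega⟩
  set one : Fin k := ⟨1, by omega⟩ with hone
  have hone0 : one ≠ 0 := by
    rw [hone]
    intro h
    have := congrArg Fin.val h
    simp at this
  have hione : ∀ i : Fin k, i + one ≠ i := by
    intro i h
    exact hone0 (by rwa [add_eq_left] at h)
  -- block assignment
  set blk : V → Fin k := fun v => (hcover v).choose with hblk
  have hblkmem : ∀ v, v ∈ B (blk v) := fun v => (hcover v).choose_spec
  have hblkuniq : ∀ v (i : Fin k), v ∈ B i → blk v = i := by
    intro v i hv
    by_contra hne'
    exact (hdisj _ _ hne').ne_of_mem (hblkmem v) hv rfl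
  -- finsets of blocks
  set Bf : Fin k → Finset V := fun i => Finset.univ.filter (fun v => blk v = i) with hBf
  have hBfmem : ∀ v (i : Fin k), v ∈ Bf i ↔ v ∈ B i := by
    intro v i
    simp only [hBf, Finset.mem_filter, Finset.mem_univ, true_and]
    constructor
    · rintro rfl; exact hblkmem v
    · exact hblkuniq v i
  set w : Fin k → ℕ := fun i => (Bf i).card with hw
  set n := Fintype.card V with hn
  have hsum : ∑ i, w i = n := by
    rw [hn, ← Finset.card_univ]
    exact (Finset.card_eq_sum_card_fiberwise (fun v _ => Finset.mem_univ (blk v))).symm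
  set α := _root_.indepNum G with hα
  set ω := G.cliqueNum with hω
  -- pairs of consecutive blocks are cliques
  have hpairclique : ∀ i : Fin k, G.IsClique ((Bf i ∪ Bf (i + one) : Finset V) : Set V) := by
    intro i
    intro x hx y hy hxy
    simp only [Finset.coe_union, Set.mem_union, Finset.mem_coe, hBfmem] at hx hy
    rcases hx with hx | hx <;> rcases hy with hy | hy
    · exact hclique i hx hy hxy
    · exact hadj i x hx y hy
    · exact (hadj i y hy x hx).symm
    · exact hclique _ hx hy hxy
  have hpairω : ∀ i : Fin k, w i + w (i + one) ≤ ω := by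
    intro i
    have hd : Disjoint (Bf i) (Bf (i + one)) := by
      rw [Finset.disjoint_left]
      intro v hv hv'
      rw [hBfmem] at hv hv'
      exact (hdisj _ _ (Ne.symm (hione i))).ne_of_mem hv hv' rfl
    have hle := SimpleGraph.IsClique.card_le_cliqueNum (G := G)
      (t := Bf i ∪ Bf (i + one)) (tc := hpairclique i)
    rw [Finset.card_union_of_disjoint hd] at hle
    exact hle
  -- independence number at least 1
  have hα1 : 1 ≤ α := by
    obtain ⟨v, hv⟩ := hne 0
    have : ({v} : Finset V).card ≤ Gᶜ.cliqueNum :=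
      IsClique.card_le_cliqueNum (tc := by simp)
    simpa [hα, _root_.indepNum] using this
  -- independence number at most k/2
  have hαm : α ≤ k / 2 := by
    obtain ⟨s, hs⟩ := Gᶜ.exists_isNClique_cliqueNum
    rw [hα, _root_.indepNum, ← hs.card_eq]
    set I := s.image blk with hI
    have hinj : Set.InjOn blk s := by
      intro x hx y hy hbxy
      by_contra hxy
      have hadj' := hs.isClique hx hy hxy
      rw [compl_adj] at hadj'
      refine hadj'.2 ?_
      have : y ∈ B (blk x) := hbxy ▸ hblkmem y
      exact hclique (blk x) (hblkmem x) this hxy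
    have hcard : I.card = s.card := Finset.card_image_of_injOn hinj
    have hIind : ∀ i ∈ I, i + one ∉ I := by
      intro i hi hi'
      simp only [hI, Finset.mem_image] at hi hi'
      obtain ⟨x, hx, hbx⟩ := hi
      obtain ⟨y, hy, hby⟩ := hi'
      have hxy : x ≠ y := by
        intro h
        rw [h, hby] at hbx
        exact hione i hbx
      have hadj' := hs.isClique hx hy hxy
      rw [compl_adj] at hadj'
      refine hadj'.2 ?_
      exact hadj i x (hbx ▸ hblkmem x) y (hby ▸ hblkmem y)
    set I' := I.image (· + one) with hI'
    have hcard' : I'.card = I.card :=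
      Finset.card_image_of_injective _ (add_left_injective one)
    have hdisjI : Disjoint I I' := by
      rw [Finset.disjoint_left]
      intro j hj hj'
      simp only [hI', Finset.mem_image] at hj'
      obtain ⟨i, hi, rfl⟩ := hj'
      exact hIind i hi hj
    have h2k : I.card + I'.card ≤ k := by
      rw [← Finset.card_union_of_disjoint hdisjI]
      calc (I ∪ I').card ≤ Finset.univ.card := Finset.card_le_univ _
        _ = k := by rw [Finset.card_univ, Fintype.card_fin]
    omega
  -- the target number of colors
  set t := max ω ⌈(n : ℚ) / α⌉₊ with htdef
  -- total bound
  have htot : n ≤ (k / 2) * t := by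
    have h1 : ⌈(n : ℚ) / α⌉₊ ≤ t := le_max_right _ _
    have h2 : (n : ℚ) / α ≤ t := le_trans (Nat.le_ceil _) (by exact_mod_cast h1)
    have hαpos : (0 : ℚ) < α := by exact_mod_cast hα1
    rw [div_le_iff₀ hαpos] at h2
    have h3 : n ≤ t * α := by exact_mod_cast h2
    calc n ≤ t * α := h3
      _ ≤ t * (k / 2) := Nat.mul_le_mul_left _ hαm
      _ = (k / 2) * t := Nat.mul_comm _ _
  -- colorability with t colors
  have hcol : G.Colorable t := by
    obtain ⟨A, hAcard, hAdisj⟩ := arcs hk w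
      (fun i => le_trans (hpairω i) (le_max_left _ _)) (by rw [hsum]; exact htot)
    have ecard : ∀ i, Fintype.card (Bf i) = Fintype.card (A i) := by
      intro i
      rw [Fintype.card_coe, Fintype.card_coe, hAcard i]
    set e : ∀ i : Fin k, (Bf i) ≃ (A i) := fun i => Fintype.equivOfCardEq (ecard i) with he
    have hmemBf : ∀ v, v ∈ Bf (blk v) := fun v => (hBfmem v (blk v)).mpr (hblkmem v)
    set C : V → Fin t := fun v => ↑(e (blk v) ⟨v, hmemBf v⟩) with hC
    have hCA : ∀ v, C v ∈ A (blk v) := fun v => (e (blk v) ⟨v, hmemBf v⟩).2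
    have hCeqv : ∀ v (i : Fin k) (h : blk v = i), C v = ↑(e i ⟨v, h ▸ hmemBf v⟩) := by
      intro v i h
      subst h
      rfl
    refine ⟨SimpleGraph.Coloring.mk C ?_⟩
    intro x y hxy hCeq
    have htri : blk y = blk x ∨ blk y = blk x + one ∨ blk x = blk y + one := by
      by_contra h
      push_neg at h
      exact hnon (blk x) (blk y) h.1 h.2.1 h.2.2 x (hblkmem x) y (hblkmem y) hxy
    rcases htri with hji | hji | hji
    · -- same block: injectivity
      rw [hCeqv x (blk x) rfl, hCeqv y (blk x) hji] at hCeq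
      have h1 := Subtype.coe_injective hCeq
      have h2 := (e (blk x)).injective h1
      have h3 : x = y := congrArg Subtype.val h2
      exact hxy.ne h3
    · have h1 : C x ∉ A (blk y) := by
        rw [hji]
        exact Finset.disjoint_left.mp (hAdisj (blk x)) (hCA x)
      rw [hCeq] at h1
      exact h1 (hCA y)
    · have h1 : C y ∉ A (blk x) := by
        rw [hji]
        exact Finset.disjoint_left.mp (hAdisj (blk y)) (hCA y)
      rw [← hCeq] at h1
      exact h1 (hCA x)
  -- lower bound: every colorable count is at least t
  have hlow : ∀ cn : ℕ, G.Colorable cn → t ≤ cn := by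
    intro cn hc
    rw [htdef, max_le_iff]
    constructor
    · -- clique number lower bound
      obtain ⟨s, hs⟩ := G.exists_isNClique_cliqueNum
      rw [hω, ← hs.card_eq]
      exact hs.isClique.card_le_of_colorable hc
    · -- counting lower bound
      obtain ⟨C⟩ := hc
      have hcount : n ≤ cn * α := by
        rw [hn, ← Finset.card_univ,
          Finset.card_eq_sum_card_fiberwise (fun v (_ : v ∈ Finset.univ) => Finset.mem_univ (C v))]
        calc ∑ c : Fin cn, (Finset.univ.filter (fun v => C v = c)).card
            ≤ ∑ _c : Fin cn, α := by
              apply Finset.sum_le_sum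
              intro c _
              apply IsClique.card_le_cliqueNum (G := Gᶜ)
              intro x hx y hy hxy
              simp only [Finset.coe_filter, Set.mem_setOf_eq, Finset.mem_univ, true_and] at hx hy
              rw [compl_adj]
              refine ⟨hxy, fun hadj' => ?_⟩
              exact C.valid hadj' (hx.trans hy.symm)
          _ = cn * α := by rw [Finset.sum_const, Finset.card_univ, Fintype.card_fin, smul_eq_mul]
      have hαpos : (0 : ℚ) < α := by exact_mod_cast hα1
      rw [Nat.ceil_le, div_le_iff₀ hαpos]
      exact_mod_cast hcount
  -- conclude
  have hfin : G.chromaticNumber ≠ ⊤ :=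
    chromaticNumber_ne_top_iff_exists.mpr ⟨t, hcol⟩
  apply le_antisymm
  · exact hcol.chromaticNumber_le
  · obtain ⟨cn, hcn⟩ := chromaticNumber_ne_top_iff_exists.mp hfin
    have h1 := G.colorable_chromaticNumber hcn
    have h2 := hlow _ h1
    rw [← ENat.coe_toNat hfin]
    have hω' : ((ω : ℕ) : ℕ∞) ≤ (G.chromaticNumber.toNat : ℕ∞) := by
      exact_mod_cast le_trans (le_max_left _ _) h2
    have hc' : ((⌈(n : ℚ) / α⌉₊ : ℕ) : ℕ∞) ≤ (G.chromaticNumber.toNat : ℕ∞) := by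
      exact_mod_cast le_trans (le_max_right _ _) h2
    exact max_le hω' hc'
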